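/- Let n ≥ 1, let μ0, μ1 ∈ ℝⁿ, let Σ0, Σ1 be symmetric positive definite real n×n matrices, and define A = Σ0^{−1/2}(Σ0^{1/2} Σ1 Σ0^{1/2})^{1/2} Σ0^{−1/2} and the affine map T(ξ) = μ1 + A(ξ − μ0). Then for every ξ ∈ ℝⁿ the Gaussian mass-conservation identity holds: φ(ξ; μ0, Σ0) = φ(T(ξ); μ1, Σ1) · det A; i.e., T transports the Gaussian density with parameters (μ0, Σ0) onto the Gaussian density with parameters (μ1, Σ1). -/

import Mathlib

open Matrix

/-- Gaussian density on `ℝⁿ`: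
`φ(x; μ, Σ) = (2π)^{-n/2} (det Σ)^{-1/2} exp(-(1/2)(x-μ)ᵀ Σ⁻¹ (x-μ))`. -/
noncomputable def gaussianDensity (n : ℕ) (μ : Fin n → ℝ) (Sigma : Matrix (Fin n) (Fin n) ℝ)
    (x : Fin n → ℝ) : ℝ :=
  (2 * Real.pi) ^ (-(n : ℝ) / 2) * Sigma.det ^ (-(1 : ℝ) / 2) *
    Real.exp (-(1 / 2) * ((x - μ) ⬝ᵥ Sigma⁻¹ *ᵥ (x - μ)))

lemma aux_det_nonneg {n : ℕ} {B : Matrix (Fin n) (Fin n) ℝ} (hB : B.PosSemidef) :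
    0 ≤ B.det := by
  exact hB.det_nonneg

lemma aux_quad {n : ℕ} (B C : Matrix (Fin n) (Fin n) ℝ) (v : Fin n → ℝ) :
    (B *ᵥ v) ⬝ᵥ C *ᵥ (B *ᵥ v) = v ⬝ᵥ (Bᵀ * C * B) *ᵥ v := by
  rw [mulVec_mulVec, dotProduct_mulVec, dotProduct_mulVec,
    ← transpose_transpose B, mulVec_transpose, vecMul_vecMul, transpose_transpose,
    Matrix.mul_assoc]

/-- with `A = Sigma0^{-1/2}(Sigma0^{1/2} Sigma1 Sigma0^{1/2})^{1/2} Sigma0^{-1/2}`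
(square roots characterized as the unique symmetric positive semidefinite square roots) and the
affine map `T ξ = μ1 + A(ξ - μ0)`, the Gaussian mass-conservation identity
`φ(ξ; μ0, Sigma0) = φ(T ξ; μ1, Sigma1) · det A` holds for every `ξ ∈ ℝⁿ`. -/
theorem gaussian_mass_conservation
    (n : ℕ) (hn : 1 ≤ n) (μ0 μ1 : Fin n → ℝ)
    (Sigma0 Sigma1 : Matrix (Fin n) (Fin n) ℝ) (hSigma0 : Sigma0.PosDef)
    (hSigma1 : Sigma1.PosDef)
    (S0 : Matrix (Fin n) (Fin n) ℝ) (hS0 : S0.PosSemidef) (hS0sq : S0 ^ 2 = Sigma0)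
    (M : Matrix (Fin n) (Fin n) ℝ) (hM : M.PosSemidef) (hMsq : M ^ 2 = S0 * Sigma1 * S0)
    (A : Matrix (Fin n) (Fin n) ℝ) (hA : A = S0⁻¹ * M * S0⁻¹)
    (T : (Fin n → ℝ) → (Fin n → ℝ)) (hT : ∀ ξ, T ξ = μ1 + A *ᵥ (ξ - μ0)) :
    ∀ ξ : Fin n → ℝ,
      gaussianDensity n μ0 Sigma0 ξ = gaussianDensity n μ1 Sigma1 (T ξ) * A.det := by
  have hdS0 : 0 < S0.det := by
    have h2 : S0.det ^ 2 = Sigma0.det := by rw [← hS0sq, det_pow]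
    nlinarith [aux_det_nonneg hS0, hSigma0.det_pos]
  have hS0u : IsUnit S0.det := hdS0.ne'.isUnit
  have hdM : 0 < M.det := by
    have h2 : M.det ^ 2 = S0.det * Sigma1.det * S0.det := by
      rw [← det_mul, ← det_mul, ← hMsq, det_pow]
    nlinarith [aux_det_nonneg hM, hSigma1.det_pos, mul_pos (mul_pos hdS0 hSigma1.det_pos) hdS0]
  have hMu : IsUnit M.det := hdM.ne'.isUnit
  have hS0t : S0ᵀ = S0 := by simpa using hS0.isHermitian.eq
  have hMt : Mᵀ = M := by simpa using hM.isHermitian.eq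
  have hAt : Aᵀ = A := by
    rw [hA]
    simp [transpose_mul, transpose_nonsing_inv, hS0t, hMt, Matrix.mul_assoc]
  have hdA : 0 < A.det := by
    rw [hA, det_mul, det_mul, det_nonsing_inv, Ring.inverse_eq_inv']
    exact mul_pos (mul_pos (inv_pos.mpr hdS0) hdM) (inv_pos.mpr hdS0)
  have hAu : IsUnit A.det := hdA.ne'.isUnit
  have hMM : M * M = S0 * Sigma1 * S0 := by rw [← pow_two, hMsq]
  have key : A * Sigma0 * A = Sigma1 := by
    rw [hA, ← hS0sq, pow_two]
    calc S0⁻¹ * M * S0⁻¹ * (S0 * S0) * (S0⁻¹ * M * S0⁻¹)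
        = S0⁻¹ * (M * (S0⁻¹ * (S0 * (S0 * (S0⁻¹ * (M * S0⁻¹)))))) := by
          simp only [Matrix.mul_assoc]
      _ = S0⁻¹ * (M * (M * S0⁻¹)) := by
          rw [nonsing_inv_mul_cancel_left _ _ hS0u, mul_nonsing_inv_cancel_left _ _ hS0u]
      _ = S0⁻¹ * (M * M) * S0⁻¹ := by simp only [Matrix.mul_assoc]
      _ = S0⁻¹ * (S0 * (Sigma1 * (S0 * S0⁻¹))) := by rw [hMM]; simp only [Matrix.mul_assoc]
      _ = Sigma1 := by
          rw [mul_nonsing_inv _ hS0u, Matrix.mul_one, nonsing_inv_mul_cancel_left _ _ hS0u]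
  have hinv : Sigma1⁻¹ = A⁻¹ * Sigma0⁻¹ * A⁻¹ := by
    rw [← key, Matrix.mul_inv_rev, Matrix.mul_inv_rev, Matrix.mul_assoc]
  have hASA : A * Sigma1⁻¹ * A = Sigma0⁻¹ := by
    rw [hinv]
    calc A * (A⁻¹ * Sigma0⁻¹ * A⁻¹) * A
        = A * (A⁻¹ * (Sigma0⁻¹ * (A⁻¹ * A))) := by simp only [Matrix.mul_assoc]
      _ = Sigma0⁻¹ := by
          rw [nonsing_inv_mul _ hAu, Matrix.mul_one, mul_nonsing_inv_cancel_left _ _ hAu]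
  have hdet : Sigma1.det = Sigma0.det * A.det ^ 2 := by
    rw [← key, det_mul, det_mul]; ring
  intro ξ
  have hTv : T ξ - μ1 = A *ᵥ (ξ - μ0) := by rw [hT]; abel
  have hquad : (T ξ - μ1) ⬝ᵥ Sigma1⁻¹ *ᵥ (T ξ - μ1) = (ξ - μ0) ⬝ᵥ Sigma0⁻¹ *ᵥ (ξ - μ0) := by
    rw [hTv, aux_quad, hAt, hASA]
  have hdets : Sigma0.det ^ (-(1 : ℝ) / 2) = Sigma1.det ^ (-(1 : ℝ) / 2) * A.det := by
    rw [hdet, Real.mul_rpow hSigma0.det_pos.le (by positivity),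
      ← Real.rpow_natCast A.det 2, ← Real.rpow_mul hdA.le]
    norm_num
    rw [Real.rpow_neg_one]
    field_simp
  unfold gaussianDensity
  rw [hquad, hdets]
  ring
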